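/- (Local data for manifolds) If G is a d-manifold (every unit sphere S(x) is a (d-1)-sphere), then for every x ∈ G and every m ≥ 1: w_m(U(x)) = (-1)^{dm}, w_m(S(x)) = 1 + (-1)^{d-1}, and w_m(B(x)) = (-1)^{d(m+1)}. -/

import Mathlib

open Finset

variable {α : Type*} [DecidableEq α]

/-- The star `U(x) = {y ∈ G : x ⊆ y}` of a simplex `x` in the complex `G`. -/
def starC (G : Finset (Finset α)) (x : Finset α) : Finset (Finset α) :=
  G.filter (fun y => x ⊆ y)

/-- The unit ball `B(x)`: the closure of the star `U(x)`. -/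
def ballC (G : Finset (Finset α)) (x : Finset α) : Finset (Finset α) :=
  G.filter (fun z => ∃ y ∈ G, x ⊆ y ∧ z ⊆ y)

/-- The unit sphere `S(x) = B(x) \ U(x)`. -/
def sphereC (G : Finset (Finset α)) (x : Finset α) : Finset (Finset α) :=
  ballC G x \ starC G x

/-- `G` is a finite abstract simplicial complex: a finite set of nonempty finite sets
closed under taking nonempty subsets. -/
def IsComplex (G : Finset (Finset α)) : Prop :=
  (∀ x ∈ G, x.Nonempty) ∧ ∀ x ∈ G, ∀ y, y ⊆ x → y.Nonempty → y ∈ G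

/-- The intersection `x_1 ∩ ... ∩ x_m` of a tuple of finite sets (for `m ≥ 1`). -/
def interTuple {m : ℕ} (X : Fin m → Finset α) : Finset α :=
  (Finset.univ.sup X).filter (fun v => ∀ j, v ∈ X j)

/-- The `m`-th characteristic `w_m(A)`. -/
def wm (m : ℕ) (A : Finset (Finset α)) : ℤ :=
  ∑ X ∈ Fintype.piFinset (fun _ : Fin m => A),
    if interTuple X ∈ A then ∏ j, (-1 : ℤ) ^ ((X j).card - 1) else 0

/-- `U` is open in the star topology on `G`: a union of stars. -/
def SCOpen (G U : Finset (Finset α)) : Prop :=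
  ∃ T ⊆ G, U = T.biUnion (fun x => starC G x)

/-- Contractibility, defined recursively: a one-point complex is contractible, and
`G` is contractible if there is a vertex `x ∈ G` such that the unit sphere `S(x)`
and `G` minus the star `U(x)` are both contractible. -/
inductive Contractible : Finset (Finset ℕ) → Prop where
  | point (v : ℕ) : Contractible {{v}}
  | step (G : Finset (Finset ℕ)) (x : Finset ℕ) (hx : x ∈ G) (hv : x.card = 1)
      (hS : Contractible (sphereC G x)) (hU : Contractible (G \ starC G x)) :
      Contractible G

/-- `d`-spheres, defined recursively: the empty complex is the `(-1)`-sphere; a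
nonempty complex `G` is a `d`-sphere if every vertex unit sphere is a
`(d-1)`-sphere (so `G` is a `d`-manifold) and removing some open star leaves a
contractible complex. -/
inductive IsSphere : ℤ → Finset (Finset ℕ) → Prop where
  | empty : IsSphere (-1) (∅ : Finset (Finset ℕ))
  | succ (d : ℤ) (G : Finset (Finset ℕ)) (hne : G.Nonempty)
      (hmani : ∀ x ∈ G, x.card = 1 → IsSphere (d - 1) (sphereC G x))
      (hcon : ∃ x ∈ G, x.card = 1 ∧ Contractible (G \ starC G x)) :
      IsSphere d G

/-! ### sign helper -/

def esgn (k : ℤ) : ℤ := if Even k then 1 else -1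

lemma esgn_add (a b : ℤ) : esgn (a + b) = esgn a * esgn b := by
  unfold esgn
  by_cases ha : Even a <;> by_cases hb : Even b <;>
    simp [ha, hb, Int.even_add]

lemma esgn_mul_self (a : ℤ) : esgn a * esgn a = 1 := by
  unfold esgn; by_cases h : Even a <;> simp [h]

lemma esgn_sub (a b : ℤ) : esgn (a - b) = esgn a * esgn b := by
  have := esgn_add (a - b) b
  simp at this
  rw [this, mul_assoc, esgn_mul_self, mul_one]

lemma esgn_natCast (n : ℕ) : esgn (n : ℤ) = (-1) ^ n := by
  unfold esgn
  by_cases h : Even n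
  · simp [h, Int.even_coe_nat, h.neg_one_pow]
  · rw [if_neg (by simpa [Int.even_coe_nat] using h), (Nat.not_even_iff_odd.1 h).neg_one_pow]

lemma esgn_pow (a : ℤ) (m : ℕ) : (esgn a) ^ m = esgn (a * m) := by
  induction m with
  | zero => simp [esgn]
  | succ n ih =>
    rw [pow_succ, ih, ← esgn_add]
    congr 1
    push_cast
    ring

/-! ### Euler sum -/

def eul (A : Finset (Finset α)) : ℤ := ∑ y ∈ A, (-1 : ℤ) ^ (y.card - 1)

def linkC (G : Finset (Finset α)) (z : Finset α) : Finset (Finset α) :=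
  G.filter (fun u => u ∩ z = ∅ ∧ u ∪ z ∈ G)

lemma mem_starC {G : Finset (Finset α)} {x y : Finset α} :
    y ∈ starC G x ↔ y ∈ G ∧ x ⊆ y := by simp [starC]

lemma mem_ballC {G : Finset (Finset α)} {x z : Finset α} :
    z ∈ ballC G x ↔ z ∈ G ∧ ∃ y ∈ G, x ⊆ y ∧ z ⊆ y := by simp [ballC]

lemma mem_sphereC {G : Finset (Finset α)} {x z : Finset α} :
    z ∈ sphereC G x ↔ z ∈ ballC G x ∧ ¬ x ⊆ z := by
  simp only [sphereC, mem_sdiff, mem_starC, mem_ballC]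
  tauto

lemma mem_linkC {G : Finset (Finset α)} {z u : Finset α} :
    u ∈ linkC G z ↔ u ∈ G ∧ u ∩ z = ∅ ∧ u ∪ z ∈ G := by simp [linkC]

lemma IsComplex.sphereC {G : Finset (Finset α)} (hG : IsComplex G) (x : Finset α) :
    IsComplex (sphereC G x) := by
  constructor
  · intro y hy
    exact hG.1 y ((mem_ballC.1 (mem_sphereC.1 hy).1).1)
  · intro y hy z hz hne
    rcases mem_sphereC.1 hy with ⟨hb, hns⟩
    rcases mem_ballC.1 hb with ⟨hyG, w, hwG, hxw, hyw⟩
    refine mem_sphereC.2 ⟨mem_ballC.2 ⟨hG.2 y hyG z hz hne, w, hwG, hxw, hz.trans hyw⟩, ?_⟩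
    exact fun h => hns (h.trans hz)

lemma IsComplex.ballC {G : Finset (Finset α)} (hG : IsComplex G) (x : Finset α) :
    IsComplex (ballC G x) := by
  constructor
  · intro y hy; exact hG.1 y (mem_ballC.1 hy).1
  · intro y hy z hz hne
    rcases mem_ballC.1 hy with ⟨hyG, w, hwG, hxw, hyw⟩
    exact mem_ballC.2 ⟨hG.2 y hyG z hz hne, w, hwG, hxw, hz.trans hyw⟩

lemma IsComplex.linkC {G : Finset (Finset α)} (hG : IsComplex G) (z : Finset α) :
    IsComplex (linkC G z) := by
  constructor
  · intro u hu; exact hG.1 u (mem_linkC.1 hu).1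
  · intro u hu w hw hne
    rcases mem_linkC.1 hu with ⟨huG, hdisj, hun⟩
    refine mem_linkC.2 ⟨hG.2 u huG w hw hne, ?_, ?_⟩
    · exact subset_empty.1 (hdisj ▸ inter_subset_inter hw (Finset.Subset.refl z))
    · exact hG.2 _ hun _ (union_subset_union hw (Finset.Subset.refl z))
        (hne.mono subset_union_left)

lemma IsComplex.sdiff_starC {G : Finset (Finset α)} (hG : IsComplex G) (x : Finset α) :
    IsComplex (G \ starC G x) := by
  constructor
  · intro y hy; exact hG.1 y (mem_sdiff.1 hy).1
  · intro y hy z hz hne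
    rcases mem_sdiff.1 hy with ⟨hyG, hys⟩
    refine mem_sdiff.2 ⟨hG.2 y hyG z hz hne, fun hc => hys ?_⟩
    exact mem_starC.2 ⟨hyG, (mem_starC.1 hc).2.trans hz⟩

-- chunk 2
lemma notmem_of_inter_empty {u z : Finset α} (h : u ∩ z = ∅) {a : α} (ha : a ∈ u) : a ∉ z :=
  fun hz => notMem_empty a (h ▸ mem_inter.2 ⟨ha, hz⟩)

lemma starC_eq_insert_image {A : Finset (Finset α)} (hA : IsComplex A) {z : Finset α}
    (hz : z ∈ A) :
    starC A z = insert z ((linkC A z).image (fun u => u ∪ z)) := by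
  ext y
  simp only [mem_starC, mem_insert, mem_image, mem_linkC]
  constructor
  · rintro ⟨hyA, hzy⟩
    by_cases h : y = z
    · exact Or.inl h
    · refine Or.inr ⟨y \ z, ⟨?_, ?_, ?_⟩, sdiff_union_of_subset hzy⟩
      · exact hA.2 y hyA _ sdiff_subset
          (sdiff_nonempty.2 fun hs => h (Subset.antisymm hs hzy))
      · ext a; simp [mem_sdiff]
      · rw [sdiff_union_of_subset hzy]; exact hyA
  · rintro (rfl | ⟨u, ⟨huA, hd, hun⟩, rfl⟩)
    · exact ⟨hz, Subset.refl _⟩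
    · exact ⟨hun, subset_union_right⟩

lemma union_sdiff_of_disjoint {u z : Finset α} (h : u ∩ z = ∅) : (u ∪ z) \ z = u := by
  ext a
  simp only [mem_sdiff, mem_union]
  constructor
  · rintro ⟨ha | ha, hz⟩
    · exact ha
    · exact absurd ha hz
  · intro ha
    exact ⟨Or.inl ha, notmem_of_inter_empty h ha⟩

lemma eul_starC_cone {A : Finset (Finset α)} (hA : IsComplex A) {z : Finset α} (hz : z ∈ A) :
    eul (starC A z) = (-1 : ℤ) ^ (z.card - 1) * (1 - eul (linkC A z)) := by
  have hznot : z ∉ (linkC A z).image (fun u => u ∪ z) := by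
    simp only [mem_image, mem_linkC]
    rintro ⟨u, ⟨huA, hd, -⟩, hu⟩
    obtain ⟨a, ha⟩ := hA.1 u huA
    exact notmem_of_inter_empty hd ha (hu ▸ mem_union_left z ha)
  rw [starC_eq_insert_image hA hz, eul, sum_insert hznot,
    sum_image (fun u hu u' hu' h => by
      rw [← union_sdiff_of_disjoint (mem_linkC.1 hu).2.1,
        ← union_sdiff_of_disjoint (mem_linkC.1 hu').2.1, h])]
  have hcut : ∀ u ∈ linkC A z,
      (-1 : ℤ) ^ ((u ∪ z).card - 1) = (-1) ^ (z.card - 1) * (-1) * (-1) ^ (u.card - 1) := by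
    intro u hu
    rcases mem_linkC.1 hu with ⟨huA, hd, -⟩
    have hcard : (u ∪ z).card = u.card + z.card :=
      card_union_of_disjoint (disjoint_iff_inter_eq_empty.2 hd)
    have hu1 : 1 ≤ u.card := card_pos.2 (hA.1 u huA)
    have hz1 : 1 ≤ z.card := card_pos.2 (hA.1 z hz)
    have h2 : u.card + z.card - 1 = (z.card - 1) + 1 + (u.card - 1) := by omega
    rw [hcard, h2, pow_add, pow_add, pow_one]
  rw [sum_congr rfl hcut, ← mul_sum]
  unfold eul
  ring

lemma sphereC_singleton_eq_linkC {G : Finset (Finset α)} (hG : IsComplex G) (v : α) :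
    sphereC G {v} = linkC G {v} := by
  ext u
  simp only [mem_sphereC, mem_ballC, mem_linkC, singleton_subset_iff]
  constructor
  · rintro ⟨⟨huG, y, hyG, hvy, huy⟩, hvu⟩
    refine ⟨huG, ?_, ?_⟩
    · rw [eq_empty_iff_forall_notMem]
      intro a ha
      rcases mem_inter.1 ha with ⟨hau, hav⟩
      exact hvu (mem_singleton.1 hav ▸ hau)
    · exact hG.2 y hyG _ (union_subset huy (singleton_subset_iff.2 hvy))
        ((hG.1 u huG).mono subset_union_left)
  · rintro ⟨huG, hd, hun⟩
    refine ⟨⟨huG, u ∪ {v}, hun, mem_union_right u (mem_singleton_self v), subset_union_left⟩, ?_⟩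
    exact notmem_of_inter_empty (by rwa [inter_comm] at hd) (mem_singleton_self v)

lemma linkC_erase {G : Finset (Finset α)} (hG : IsComplex G) {z : Finset α} {v : α}
    (hv : v ∈ z) :
    linkC G z = linkC (linkC G {v}) (z.erase v) := by
  have hins : insert v (z.erase v) = z := insert_erase hv
  ext w
  simp only [mem_linkC]
  constructor
  · rintro ⟨hwG, hd, hun⟩
    have hvw : v ∉ w := notmem_of_inter_empty (by rwa [inter_comm] at hd) hv
    have hwne : w.Nonempty := hG.1 w hwG
    have hsub1 : w ∪ {v} ⊆ w ∪ z := union_subset_union_right (singleton_subset_iff.2 hv)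
    have hdis_e : w ∩ z.erase v = ∅ := by
      rw [eq_empty_iff_forall_notMem]
      intro a ha
      rcases mem_inter.1 ha with ⟨haw, hae⟩
      exact notmem_of_inter_empty hd haw (mem_of_mem_erase hae)
    have hwe_eq : (w ∪ z.erase v) ∪ {v} = w ∪ z := by
      rw [union_comm _ ({v} : Finset α), ← insert_eq, ← union_insert, hins]
    refine ⟨⟨hwG, ?_, ?_⟩, hdis_e, ?_⟩
    · rw [eq_empty_iff_forall_notMem]
      intro a ha
      rcases mem_inter.1 ha with ⟨haw, hav⟩
      exact hvw (mem_singleton.1 hav ▸ haw)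
    · exact hG.2 _ hun _ hsub1 (hwne.mono subset_union_left)
    · refine ⟨hG.2 _ hun _ (by rw [← hwe_eq]; exact subset_union_left)
        (hwne.mono subset_union_left), ?_, ?_⟩
      · rw [eq_empty_iff_forall_notMem]
        intro a ha
        rcases mem_inter.1 ha with ⟨hawz, hav⟩
        have hav' := mem_singleton.1 hav
        rcases mem_union.1 hawz with h1 | h1
        · exact hvw (hav' ▸ h1)
        · exact notMem_erase v z (hav' ▸ h1)
      · rw [hwe_eq]; exact hun
  · rintro ⟨⟨hwG, hdv, hunv⟩, hde, hweG, hdv2, hun2⟩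
    have hvw : v ∉ w := notmem_of_inter_empty (by rwa [inter_comm] at hdv) (mem_singleton_self v)
    have hwe_eq : (w ∪ z.erase v) ∪ {v} = w ∪ z := by
      rw [union_comm _ ({v} : Finset α), ← insert_eq, ← union_insert, hins]
    refine ⟨hwG, ?_, by rwa [hwe_eq] at hun2⟩
    rw [eq_empty_iff_forall_notMem]
    intro a ha
    rcases mem_inter.1 ha with ⟨haw, haz⟩
    by_cases hav : a = v
    · exact hvw (hav ▸ haw)
    · exact notmem_of_inter_empty hde haw (mem_erase.2 ⟨hav, haz⟩)

-- chunk 3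
lemma neg_one_pow_sub_one {n : ℕ} (h : 1 ≤ n) : (-1 : ℤ) ^ (n - 1) = -(-1) ^ n := by
  have h2 : n - 1 + 1 = n := by omega
  conv_rhs => rw [← h2, pow_succ]
  ring

lemma inter_union_sdiff_self (y x : Finset α) : (y ∩ x) ∪ (y \ x) = y := by
  ext a; simp only [mem_union, mem_inter, mem_sdiff]; tauto

lemma eul_ballC {K : Finset (Finset α)} (hK : IsComplex K) {x : Finset α} (hx : x ∈ K) :
    eul (ballC K x) = 1 := by
  classical
  have hxne : x.Nonempty := hK.1 x hx
  have key : eul (ballC K x) =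
      ∑ p ∈ (x.powerset ×ˢ insert (∅ : Finset α) (linkC K x)).erase (∅, ∅),
        (-1 : ℤ) ^ ((p.1 ∪ p.2).card - 1) := by
    unfold eul
    refine sum_bij' (fun y _ => (y ∩ x, y \ x)) (fun p _ => p.1 ∪ p.2) ?_ ?_ ?_ ?_ ?_
    · intro y hy
      rcases mem_ballC.1 hy with ⟨hyK, w, hwK, hxw, hyw⟩
      have hyne := hK.1 y hyK
      refine mem_erase.2 ⟨?_, mem_product.2 ⟨mem_powerset.2 inter_subset_right, ?_⟩⟩
      · intro hc
        have h1 : y ∩ x = ∅ := congrArg Prod.fst hc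
        have h2 : y \ x = ∅ := congrArg Prod.snd hc
        rw [← inter_union_sdiff_self y x, h1, h2] at hyne
        simp at hyne
      · by_cases hd : y \ x = ∅
        · rw [hd]; exact mem_insert_self _ _
        · refine mem_insert_of_mem (mem_linkC.2
            ⟨hK.2 y hyK _ sdiff_subset (nonempty_iff_ne_empty.2 hd), ?_, ?_⟩)
          · ext a; simp [mem_sdiff]
          · exact hK.2 w hwK _ (union_subset (sdiff_subset.trans hyw) hxw)
              (hxne.mono subset_union_right)
    · rintro ⟨s, u⟩ hp
      dsimp only
      rcases mem_erase.1 hp with ⟨hne, hprod⟩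
      rcases mem_product.1 hprod with ⟨hs, hu⟩
      have hsx := mem_powerset.1 hs
      rcases mem_insert.1 hu with hu0 | huL
      · subst hu0
        have hsne : s.Nonempty := by
          rcases eq_or_ne s ∅ with rfl | h
          · exact absurd rfl hne
          · exact nonempty_iff_ne_empty.2 h
        simp only [union_empty]
        exact mem_ballC.2 ⟨hK.2 x hx s hsx hsne, x, hx, Subset.refl x, hsx⟩
      · rcases mem_linkC.1 huL with ⟨huK, hd, hun⟩
        have hune : u.Nonempty := hK.1 u huK
        have hsub : s ∪ u ⊆ u ∪ x := union_subset (hsx.trans subset_union_right) subset_union_left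
        exact mem_ballC.2 ⟨hK.2 _ hun _ hsub (hune.mono subset_union_right),
          u ∪ x, hun, subset_union_right, hsub⟩
    · intro y hy
      exact inter_union_sdiff_self y x
    · rintro ⟨s, u⟩ hp
      dsimp only
      rcases mem_erase.1 hp with ⟨hne, hprod⟩
      rcases mem_product.1 hprod with ⟨hs, hu⟩
      have hsx := mem_powerset.1 hs
      have hud : ∀ a ∈ u, a ∉ x := by
        rcases mem_insert.1 hu with hu0 | huL
        · subst hu0; intro a ha; simp at ha
        · exact fun a ha => notmem_of_inter_empty (mem_linkC.1 huL).2.1 ha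
      have e1 : (s ∪ u) ∩ x = s := by
        ext a
        simp only [mem_inter, mem_union]
        constructor
        · rintro ⟨ha | ha, hax⟩
          · exact ha
          · exact absurd hax (hud a ha)
        · exact fun ha => ⟨Or.inl ha, hsx ha⟩
      have e2 : (s ∪ u) \ x = u := by
        ext a
        simp only [mem_sdiff, mem_union]
        constructor
        · rintro ⟨ha | ha, hax⟩
          · exact absurd (hsx ha) hax
          · exact ha
        · exact fun ha => ⟨Or.inr ha, hud a ha⟩
      simp only [e1, e2]
    · intro y hy
      rw [inter_union_sdiff_self y x]
  have hmem00 : ((∅ : Finset α), (∅ : Finset α)) ∈ x.powerset ×ˢ insert ∅ (linkC K x) :=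
    mem_product.2 ⟨mem_powerset.2 (empty_subset x), mem_insert_self _ _⟩
  have hterm : ∀ p ∈ (x.powerset ×ˢ insert (∅ : Finset α) (linkC K x)).erase (∅, ∅),
      (-1 : ℤ) ^ ((p.1 ∪ p.2).card - 1) = -((-1 : ℤ) ^ p.1.card * (-1 : ℤ) ^ p.2.card) := by
    rintro ⟨s, u⟩ hp
    rcases mem_erase.1 hp with ⟨hne, hprod⟩
    rcases mem_product.1 hprod with ⟨hs, hu⟩
    have hsx := mem_powerset.1 hs
    have hud : ∀ a ∈ u, a ∉ x := by
      rcases mem_insert.1 hu with hu0 | huL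
      · subst hu0; intro a ha; simp at ha
      · exact fun a ha => notmem_of_inter_empty (mem_linkC.1 huL).2.1 ha
    have hd : Disjoint s u := by
      rw [disjoint_left]
      exact fun a has hau => hud a hau (hsx has)
    have hcard : (s ∪ u).card = s.card + u.card := card_union_of_disjoint hd
    have hpos : 1 ≤ s.card + u.card := by
      rcases Nat.eq_zero_or_pos (s.card + u.card) with h0 | h1
      · exfalso
        have hs0 : s = ∅ := card_eq_zero.1 (by omega)
        have hu0 : u = ∅ := card_eq_zero.1 (by omega)
        exact hne (by rw [hs0, hu0])
      · exact h1
    rw [hcard, neg_one_pow_sub_one hpos, pow_add]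
  rw [key, sum_congr rfl hterm, sum_erase_eq_sub hmem00]
  have hprod0 : ∑ p ∈ x.powerset ×ˢ insert (∅ : Finset α) (linkC K x),
      -((-1 : ℤ) ^ p.1.card * (-1 : ℤ) ^ p.2.card) = 0 := by
    rw [Finset.sum_product]
    have hinner : ∀ s ∈ x.powerset,
        (∑ u ∈ insert (∅ : Finset α) (linkC K x), -((-1 : ℤ) ^ s.card * (-1 : ℤ) ^ u.card))
          = (-1 : ℤ) ^ s.card *
            ∑ u ∈ insert (∅ : Finset α) (linkC K x), -(-1 : ℤ) ^ u.card := by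
      intro s _
      rw [mul_sum]
      exact sum_congr rfl fun u _ => by ring
    rw [sum_congr rfl hinner, ← sum_mul, sum_powerset_neg_one_pow_card_of_nonempty hxne,
      zero_mul]
  rw [hprod0]
  norm_num

-- chunk 4 : sphere theory
lemma IsSphere.vertex {k : ℤ} {K : Finset (Finset ℕ)} (h : IsSphere k K)
    {x : Finset ℕ} (hx : x ∈ K) (hc : x.card = 1) : IsSphere (k - 1) (sphereC K x) := by
  cases h with
  | empty => exact absurd hx (notMem_empty x)
  | succ d G hne hmani hcon => exact hmani x hx hc

lemma eul_sdiff_starC {K : Finset (Finset α)} (x : Finset α) :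
    eul (K \ starC K x) + eul (starC K x) = eul K :=
  sum_sdiff (filter_subset _ _)

lemma eul_starC_vertex {K : Finset (Finset α)} (hK : IsComplex K) {x : Finset α}
    (hx : x ∈ K) (hc : x.card = 1) : eul (starC K x) = 1 - eul (sphereC K x) := by
  obtain ⟨v, rfl⟩ := card_eq_one.1 hc
  rw [eul_starC_cone hK hx, sphereC_singleton_eq_linkC hK v]
  simp

lemma Contractible.eul_eq_one :
    ∀ {K : Finset (Finset ℕ)}, Contractible K → IsComplex K → eul K = 1 := by
  intro K h
  induction h with
  | point v => intro _; simp [eul]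
  | step G x hx hv hS hU ihS ihU =>
    intro hK
    have h1 := eul_sdiff_starC (K := G) x
    rw [eul_starC_vertex hK hx hv, ihS (hK.sphereC x), ihU (hK.sdiff_starC x)] at h1
    linarith

lemma IsSphere.eul_eq :
    ∀ {k : ℤ} {K : Finset (Finset ℕ)}, IsSphere k K → IsComplex K → eul K = 1 + esgn k := by
  intro k K h
  induction h with
  | empty =>
    intro _
    have : ¬ Even (-1 : ℤ) := by decide
    simp [eul, esgn, this]
  | succ d G hne hmani hcon ih =>
    intro hK
    obtain ⟨x, hx, hcard, hcontr⟩ := hcon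
    have h1 := eul_sdiff_starC (K := G) x
    rw [eul_starC_vertex hK hx hcard, ih x hx hcard (hK.sphereC x),
      hcontr.eul_eq_one (hK.sdiff_starC x)] at h1
    rw [← h1, esgn_sub]
    have : esgn 1 = -1 := by decide
    rw [this]
    ring

-- chunk 5
lemma link_isSphere :
    ∀ (n : ℕ) (k : ℤ) (K : Finset (Finset ℕ)), IsComplex K →
      (∀ x ∈ K, x.card = 1 → IsSphere (k - 1) (sphereC K x)) →
      ∀ z ∈ K, z.card = n → IsSphere (k - n) (linkC K z) := by
  intro n
  induction n using Nat.strong_induction_on with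
  | _ n ih =>
    intro k K hK hm z hz hcard
    obtain ⟨v, hv⟩ := hK.1 z hz
    have hvK : ({v} : Finset ℕ) ∈ K :=
      hK.2 z hz {v} (singleton_subset_iff.2 hv) (singleton_nonempty v)
    have hH : IsSphere (k - 1) (sphereC K {v}) := hm {v} hvK (card_singleton v)
    by_cases h1 : z = {v}
    · subst h1
      rw [sphereC_singleton_eq_linkC hK v] at hH
      have hn : n = 1 := by rw [← hcard, card_singleton]
      subst hn
      simpa using hH
    · have hn1 : 1 ≤ n := by rw [← hcard]; exact card_pos.2 ⟨v, hv⟩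
      have hn2 : 2 ≤ n := by
        by_contra h
        have hz1 : z.card = 1 := by omega
        obtain ⟨w, hw⟩ := card_eq_one.1 hz1
        rw [hw] at hv
        exact h1 (by rw [hw, mem_singleton.1 hv])
      have hHc : IsComplex (sphereC K {v}) := hK.sphereC {v}
      have hmH : ∀ x ∈ sphereC K {v}, x.card = 1 →
          IsSphere (k - 1 - 1) (sphereC (sphereC K {v}) x) :=
        fun x hx hc => hH.vertex hx hc
      have hzne : (z.erase v).Nonempty := by
        rw [← card_pos, card_erase_of_mem hv, hcard]; omega
      have hzerase : z.erase v ∈ sphereC K {v} := by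
        refine mem_sphereC.2 ⟨mem_ballC.2 ⟨hK.2 z hz _ (erase_subset v z) hzne, z, hz,
          singleton_subset_iff.2 hv, erase_subset v z⟩, ?_⟩
        rw [singleton_subset_iff]
        exact notMem_erase v z
      have hcard' : (z.erase v).card = n - 1 := by rw [card_erase_of_mem hv, hcard]
      have hres := ih (n - 1) (by omega) (k - 1) (sphereC K {v}) hHc hmH (z.erase v)
        hzerase hcard'
      rw [sphereC_singleton_eq_linkC hK v, ← linkC_erase hK hv] at hres
      have harith : k - 1 - ((n - 1 : ℕ) : ℤ) = k - n := by
        push_cast [Nat.cast_sub hn1]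
        ring
      rwa [harith] at hres

lemma eul_starC_manifold {G : Finset (Finset ℕ)} (hG : IsComplex G) {d : ℕ}
    (hmani : ∀ x ∈ G, x.card = 1 → IsSphere ((d : ℤ) - 1) (sphereC G x))
    {z : Finset ℕ} (hz : z ∈ G) : eul (starC G z) = esgn d := by
  have hlink : IsSphere ((d : ℤ) - z.card) (linkC G z) :=
    link_isSphere z.card d G hG hmani z hz rfl
  have heul : eul (linkC G z) = 1 + esgn ((d : ℤ) - z.card) := hlink.eul_eq (hG.linkC z)
  rw [eul_starC_cone hG hz, heul]
  have h1 : 1 ≤ z.card := card_pos.2 (hG.1 z hz)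
  have h2 : ((-1 : ℤ)) ^ (z.card - 1) = -esgn (z.card : ℤ) := by
    rw [esgn_natCast, neg_one_pow_sub_one h1]
  have h3 : esgn ((d : ℤ) - z.card) = esgn (d : ℤ) * esgn (z.card : ℤ) := esgn_sub _ _
  have h4 := esgn_mul_self ((z.card : ℤ))
  rw [h2, h3]
  linear_combination esgn ((d : ℤ)) * h4

-- wm machinery
lemma interTuple_subset {m : ℕ} (X : Fin m → Finset α) (j : Fin m) :
    interTuple X ⊆ X j := fun v hv => (mem_filter.1 hv).2 j

lemma subset_interTuple {m : ℕ} (hm : 1 ≤ m) {X : Fin m → Finset α} {z : Finset α}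
    (h : ∀ j, z ⊆ X j) : z ⊆ interTuple X := by
  intro v hv
  refine mem_filter.2 ⟨?_, fun j => h j hv⟩
  exact (le_sup (f := X) (mem_univ (⟨0, hm⟩ : Fin m))) (h ⟨0, hm⟩ hv)

lemma subset_interTuple_iff {m : ℕ} (hm : 1 ≤ m) {X : Fin m → Finset α} {z : Finset α} :
    z ⊆ interTuple X ↔ ∀ j, z ⊆ X j :=
  ⟨fun h j => h.trans (interTuple_subset X j), subset_interTuple hm⟩

lemma wm_eq_pow_of_closed {A : Finset (Finset α)} {m : ℕ}
    (h : ∀ X ∈ Fintype.piFinset (fun _ : Fin m => A), interTuple X ∈ A) :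
    wm m A = (eul A) ^ m := by
  unfold wm
  rw [sum_congr rfl (fun X hX => if_pos (h X hX)),
    Finset.sum_prod_piFinset A (fun (_ : Fin m) (y : Finset α) => (-1 : ℤ) ^ (y.card - 1))]
  simp [eul]

lemma interTuple_mem_starC {G : Finset (Finset α)} (hG : IsComplex G) {x : Finset α}
    (hx : x ∈ G) {m : ℕ} (hm : 1 ≤ m) (X : Fin m → Finset α)
    (hX : X ∈ Fintype.piFinset (fun _ : Fin m => starC G x)) :
    interTuple X ∈ starC G x := by
  have hXj : ∀ j, X j ∈ starC G x := fun j => (Fintype.mem_piFinset.1 hX) j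
  have hsub : x ⊆ interTuple X := subset_interTuple hm (fun j => (mem_starC.1 (hXj j)).2)
  have hxne : x.Nonempty := hG.1 x hx
  exact mem_starC.2 ⟨hG.2 _ (mem_starC.1 (hXj ⟨0, hm⟩)).1 _ (interTuple_subset X ⟨0, hm⟩)
    (hxne.mono hsub), hsub⟩

lemma indicator_sum {A : Finset (Finset α)} (hA : IsComplex A) {m : ℕ} (hm : 1 ≤ m)
    (X : Fin m → Finset α) (hX : X ∈ Fintype.piFinset (fun _ : Fin m => A)) :
    ∑ z ∈ A, (if ∀ j, z ⊆ X j then (-1 : ℤ) ^ (z.card - 1) else 0)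
      = if interTuple X ∈ A then 1 else 0 := by
  classical
  have hXj : ∀ j, X j ∈ A := fun j => (Fintype.mem_piFinset.1 hX) j
  have hcond : ∀ z : Finset α, (∀ j, z ⊆ X j) ↔ z ⊆ interTuple X :=
    fun z => (subset_interTuple_iff hm).symm
  rw [← sum_filter]
  by_cases hI : interTuple X ∈ A
  · rw [if_pos hI]
    have hIne : (interTuple X).Nonempty := hA.1 _ hI
    have hset : A.filter (fun z => ∀ j, z ⊆ X j)
        = (interTuple X).powerset \ {∅} := by
      ext z
      simp only [mem_filter, mem_sdiff, mem_powerset, mem_singleton]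
      constructor
      · rintro ⟨hzA, hz⟩
        exact ⟨(hcond z).1 hz, nonempty_iff_ne_empty.1 (hA.1 z hzA)⟩
      · rintro ⟨hz, hne⟩
        exact ⟨hA.2 _ hI z hz (nonempty_iff_ne_empty.2 hne), (hcond z).2 hz⟩
    rw [hset]
    have hterm : ∀ z ∈ (interTuple X).powerset \ {∅},
        (-1 : ℤ) ^ (z.card - 1) = -(-1 : ℤ) ^ z.card := by
      intro z hz
      rcases mem_sdiff.1 hz with ⟨-, hne⟩
      exact neg_one_pow_sub_one (card_pos.2 (nonempty_iff_ne_empty.2 (by simpa using hne)))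
    rw [sum_congr rfl hterm, sum_sdiff_eq_sub (by simp)]
    have hps := sum_powerset_neg_one_pow_card_of_nonempty hIne
    have hneg : ∑ z ∈ (interTuple X).powerset, -(-1 : ℤ) ^ z.card
        = -∑ z ∈ (interTuple X).powerset, (-1 : ℤ) ^ z.card := by
      rw [← Finset.sum_neg_distrib]
    rw [hneg, hps, sum_singleton]
    norm_num
  · rw [if_neg hI]
    have hIempty : interTuple X = ∅ := by
      by_contra hne
      exact hI (hA.2 _ (hXj ⟨0, hm⟩) _ (interTuple_subset X ⟨0, hm⟩)
        (nonempty_iff_ne_empty.2 hne))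
    have : A.filter (fun z => ∀ j, z ⊆ X j) = ∅ := by
      rw [eq_empty_iff_forall_notMem]
      rintro z hz
      rcases mem_filter.1 hz with ⟨hzA, hzc⟩
      obtain ⟨a, ha⟩ := hA.1 z hzA
      have := (hcond z).1 hzc ha
      rw [hIempty] at this
      exact notMem_empty a this
    rw [this, sum_empty]
-- chunk 6 : master identity and identifications
lemma wm_master {A : Finset (Finset α)} (hA : IsComplex A) {m : ℕ} (hm : 1 ≤ m) :
    wm m A = ∑ z ∈ A, (-1 : ℤ) ^ (z.card - 1) * (eul (starC A z)) ^ m := by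
  classical
  unfold wm
  have step1 : ∀ X ∈ Fintype.piFinset (fun _ : Fin m => A),
      (if interTuple X ∈ A then ∏ j, (-1 : ℤ) ^ ((X j).card - 1) else 0)
        = ∑ z ∈ A, (if ∀ j, z ⊆ X j then (-1 : ℤ) ^ (z.card - 1) else 0)
            * ∏ j, (-1 : ℤ) ^ ((X j).card - 1) := by
    intro X hX
    rw [← sum_mul, indicator_sum hA hm X hX]
    by_cases hI : interTuple X ∈ A <;> simp [hI]
  rw [sum_congr rfl step1, sum_comm]
  refine sum_congr rfl fun z hz => ?_
  have step2 : ∀ X ∈ Fintype.piFinset (fun _ : Fin m => A),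
      (if ∀ j, z ⊆ X j then (-1 : ℤ) ^ (z.card - 1) else 0)
          * ∏ j, (-1 : ℤ) ^ ((X j).card - 1)
        = (-1 : ℤ) ^ (z.card - 1) *
            (if ∀ j, X j ∈ starC A z then ∏ j, (-1 : ℤ) ^ ((X j).card - 1) else 0) := by
    intro X hX
    have hXj : ∀ j, X j ∈ A := fun j => (Fintype.mem_piFinset.1 hX) j
    by_cases h : ∀ j, z ⊆ X j
    · rw [if_pos h, if_pos (fun j => mem_starC.2 ⟨hXj j, h j⟩)]
    · rw [if_neg h, if_neg (fun hc => h (fun j => (mem_starC.1 (hc j)).2)), zero_mul,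
        mul_zero]
  rw [sum_congr rfl step2, ← mul_sum]
  congr 1
  rw [← sum_filter]
  have hfilter : (Fintype.piFinset (fun _ : Fin m => A)).filter
        (fun X => ∀ j, X j ∈ starC A z)
      = Fintype.piFinset (fun _ : Fin m => starC A z) := by
    ext X
    simp only [mem_filter, Fintype.mem_piFinset]
    constructor
    · rintro ⟨h1, h2⟩ j
      exact h2 j
    · intro h
      exact ⟨fun j => (mem_starC.1 (h j)).1, fun j => h j⟩
  rw [hfilter,
    Finset.sum_prod_piFinset (starC A z) (fun (_ : Fin m) (y : Finset α) => (-1 : ℤ) ^ (y.card - 1))]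
  simp [eul]

lemma starC_subset_ballC {G : Finset (Finset α)} (x : Finset α) :
    starC G x ⊆ ballC G x := by
  intro y hy
  rcases mem_starC.1 hy with ⟨hyG, hxy⟩
  exact mem_ballC.2 ⟨hyG, y, hyG, hxy, Subset.refl y⟩

lemma starC_ballC_of_mem_starC {G : Finset (Finset α)} {x z : Finset α}
    (hz : z ∈ starC G x) : starC (ballC G x) z = starC G z := by
  rcases mem_starC.1 hz with ⟨hzG, hxz⟩
  ext y
  simp only [mem_starC, mem_ballC]
  constructor
  · rintro ⟨⟨hyG, -⟩, hzy⟩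
    exact ⟨hyG, hzy⟩
  · rintro ⟨hyG, hzy⟩
    exact ⟨⟨hyG, y, hyG, hxz.trans hzy, Subset.refl y⟩, hzy⟩

lemma sdiff_mem_linkC {G : Finset (Finset α)} (hG : IsComplex G) {x z : Finset α}
    (hx : x ∈ G) (hz : z ∈ sphereC G x) : x \ z ∈ linkC G z := by
  rcases mem_sphereC.1 hz with ⟨hzb, hnxz⟩
  rcases mem_ballC.1 hzb with ⟨hzG, w, hwG, hxw, hzw⟩
  have hne : (x \ z).Nonempty := by rwa [sdiff_nonempty]
  refine mem_linkC.2 ⟨hG.2 x hx _ sdiff_subset hne, ?_, ?_⟩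
  · ext a; simp [mem_sdiff]
  · rw [sdiff_union_self_eq_union]
    exact hG.2 w hwG _ (union_subset hxw hzw) ((hG.1 x hx).mono subset_union_left)

lemma linkC_ballC_eq {G : Finset (Finset α)} (hG : IsComplex G) {x z : Finset α}
    (hx : x ∈ G) (hz : z ∈ sphereC G x) :
    linkC (ballC G x) z = ballC (linkC G z) (x \ z) := by
  rcases mem_sphereC.1 hz with ⟨hzb, hnxz⟩
  ext u
  simp only [mem_linkC, mem_ballC]
  constructor
  · rintro ⟨⟨huG, w1, hw1G, hxw1, huw1⟩, hd, huzG, w, hwG, hxw, huzw⟩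
    have hzw : z ⊆ w := subset_union_right.trans huzw
    have huw : u ⊆ w := subset_union_left.trans huzw
    obtain ⟨a, hax, haz⟩ := not_subset.1 hnxz
    have hyne : (w \ z).Nonempty := ⟨a, mem_sdiff.2 ⟨hxw hax, haz⟩⟩
    refine ⟨⟨huG, hd, huzG⟩, w \ z, ⟨hG.2 w hwG _ sdiff_subset hyne, ?_, ?_⟩, ?_, ?_⟩
    · ext b; simp [mem_sdiff]
    · rw [sdiff_union_self_eq_union, union_eq_left.2 hzw]
      exact hwG
    · intro b hb
      rcases mem_sdiff.1 hb with ⟨hbx, hbz⟩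
      exact mem_sdiff.2 ⟨hxw hbx, hbz⟩
    · intro b hb
      exact mem_sdiff.2 ⟨huw hb, notmem_of_inter_empty hd hb⟩
  · rintro ⟨⟨huG, hd, huzG⟩, y, ⟨hyG, hdyz, hyzG⟩, hxzy, huy⟩
    have hxyz : x ⊆ y ∪ z := by
      intro a ha
      by_cases haz : a ∈ z
      · exact mem_union_right y haz
      · exact mem_union_left z (hxzy (mem_sdiff.2 ⟨ha, haz⟩))
    exact ⟨⟨huG, y ∪ z, hyzG, hxyz, huy.trans subset_union_left⟩, hd, huzG, y ∪ z, hyzG,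
      hxyz, union_subset (huy.trans subset_union_left) subset_union_right⟩

lemma eul_starC_ballC_zero {G : Finset (Finset α)} (hG : IsComplex G) {x z : Finset α}
    (hx : x ∈ G) (hz : z ∈ sphereC G x) : eul (starC (ballC G x) z) = 0 := by
  have hzb : z ∈ ballC G x := (mem_sphereC.1 hz).1
  rw [eul_starC_cone (hG.ballC x) hzb, linkC_ballC_eq hG hx hz,
    eul_ballC (hG.linkC z) (sdiff_mem_linkC hG hx hz)]
  ring

lemma union_mem_of_sphereC {G : Finset (Finset α)} (hG : IsComplex G) {x z : Finset α}
    (hx : x ∈ G) (hz : z ∈ sphereC G x) : x ∪ z ∈ G := by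
  rcases mem_ballC.1 (mem_sphereC.1 hz).1 with ⟨hzG, w, hwG, hxw, hzw⟩
  exact hG.2 w hwG _ (union_subset hxw hzw) ((hG.1 x hx).mono subset_union_left)

lemma starC_sphereC_eq {G : Finset (Finset α)} {x z : Finset α} (hz : z ∈ sphereC G x) :
    starC (sphereC G x) z = starC (ballC G x) z \ starC G (x ∪ z) := by
  ext y
  simp only [mem_starC, mem_sdiff, mem_sphereC, union_subset_iff]
  constructor
  · rintro ⟨⟨hyb, hnxy⟩, hzy⟩
    exact ⟨⟨hyb, hzy⟩, fun hc => hnxy hc.2.1⟩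
  · rintro ⟨⟨hyb, hzy⟩, hc⟩
    refine ⟨⟨hyb, fun hxy => hc ⟨(mem_ballC.1 hyb).1, hxy, hzy⟩⟩, hzy⟩

lemma starC_union_subset {G : Finset (Finset α)} {x z : Finset α} :
    starC G (x ∪ z) ⊆ starC (ballC G x) z := by
  intro y hy
  rcases mem_starC.1 hy with ⟨hyG, hxzy⟩
  rw [union_subset_iff] at hxzy
  exact mem_starC.2 ⟨mem_ballC.2 ⟨hyG, y, hyG, hxzy.1, Subset.refl y⟩, hxzy.2⟩

lemma eul_starC_sphereC {G : Finset (Finset ℕ)} (hG : IsComplex G) {d : ℕ}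
    (hmani : ∀ x ∈ G, x.card = 1 → IsSphere ((d : ℤ) - 1) (sphereC G x))
    {x z : Finset ℕ} (hx : x ∈ G) (hz : z ∈ sphereC G x) :
    eul (starC (sphereC G x) z) = -esgn d := by
  have hxz : x ∪ z ∈ G := union_mem_of_sphereC hG hx hz
  have hdiff : eul (starC (sphereC G x) z)
      = eul (starC (ballC G x) z) - eul (starC G (x ∪ z)) := by
    rw [starC_sphereC_eq hz]
    exact sum_sdiff_eq_sub starC_union_subset
  rw [hdiff, eul_starC_ballC_zero hG hx hz, eul_starC_manifold hG hmani hxz]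
  ring

/-- Local data in the manifold case: if `G` is a `d`-manifold (every vertex unit
sphere is a `(d-1)`-sphere), then for every `x ∈ G` and every `m ≥ 1`:
`w_m(U(x)) = (-1)^{dm}`, `w_m(S(x)) = 1 + (-1)^{d-1} = 1 - (-1)^d`, and
`w_m(B(x)) = (-1)^{d(m+1)}`. -/
theorem manifold_local_data (G : Finset (Finset ℕ)) (hG : IsComplex G) (d : ℕ)
    (hmani : ∀ x ∈ G, x.card = 1 → IsSphere ((d : ℤ) - 1) (sphereC G x))
    (x : Finset ℕ) (hx : x ∈ G) (m : ℕ) (hm : 1 ≤ m) :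
    wm m (starC G x) = (-1 : ℤ) ^ (d * m) ∧
    wm m (sphereC G x) = 1 - (-1 : ℤ) ^ d ∧
    wm m (ballC G x) = (-1 : ℤ) ^ (d * (m + 1)) := by
  have hball : IsComplex (ballC G x) := hG.ballC x
  have hsphere : IsComplex (sphereC G x) := hG.sphereC x
  have hstar_sub := starC_subset_ballC (G := G) x
  have heulU : eul (starC G x) = esgn d := eul_starC_manifold hG hmani hx
  have heulB : eul (ballC G x) = 1 := eul_ballC hG hx
  have heulS : eul (sphereC G x) = 1 - esgn d := by
    have h : eul (sphereC G x) + eul (starC G x) = eul (ballC G x) :=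
      sum_sdiff hstar_sub
    rw [heulU, heulB] at h
    linarith
  refine ⟨?_, ?_, ?_⟩
  · -- star
    rw [wm_eq_pow_of_closed (interTuple_mem_starC hG hx hm), heulU, esgn_pow,
      show ((d : ℤ) * m) = ((d * m : ℕ) : ℤ) by push_cast; ring, esgn_natCast]
  · -- sphere
    rw [wm_master hsphere hm]
    have hterm : ∀ z ∈ sphereC G x,
        (-1 : ℤ) ^ (z.card - 1) * (eul (starC (sphereC G x) z)) ^ m
          = (-1 : ℤ) ^ (z.card - 1) * (-esgn (d : ℤ)) ^ m := by
      intro z hz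
      rw [eul_starC_sphereC hG hmani hx hz]
    rw [sum_congr rfl hterm, ← sum_mul]
    have hfold : (∑ z ∈ sphereC G x, (-1 : ℤ) ^ (z.card - 1)) = eul (sphereC G x) := rfl
    rw [hfold, heulS]
    by_cases hev : Even d
    · have h1 : esgn ((d : ℤ)) = 1 := if_pos (by exact_mod_cast hev)
      rw [h1, hev.neg_one_pow]
      simp
    · have hodd : Odd d := Nat.not_even_iff_odd.1 hev
      have h1 : esgn ((d : ℤ)) = -1 := if_neg (by
        simpa [Int.even_coe_nat] using hev)
      rw [h1, hodd.neg_one_pow]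
      norm_num
  · -- ball
    rw [wm_master hball hm]
    have hsplit := sum_sdiff
      (f := fun z => (-1 : ℤ) ^ (z.card - 1) * (eul (starC (ballC G x) z)) ^ m) hstar_sub
    rw [← hsplit]
    have hMS : ∑ z ∈ ballC G x \ starC G x,
        (-1 : ℤ) ^ (z.card - 1) * (eul (starC (ballC G x) z)) ^ m = 0 := by
      refine sum_eq_zero fun z hz => ?_
      have hz' : z ∈ sphereC G x := hz
      rw [eul_starC_ballC_zero hG hx hz', zero_pow (by omega), mul_zero]
    have hMU : ∑ z ∈ starC G x,
        (-1 : ℤ) ^ (z.card - 1) * (eul (starC (ballC G x) z)) ^ m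
          = eul (starC G x) * (esgn (d : ℤ)) ^ m := by
      have hterm : ∀ z ∈ starC G x,
          (-1 : ℤ) ^ (z.card - 1) * (eul (starC (ballC G x) z)) ^ m
            = (-1 : ℤ) ^ (z.card - 1) * (esgn (d : ℤ)) ^ m := by
        intro z hz
        rw [starC_ballC_of_mem_starC hz,
          eul_starC_manifold hG hmani (mem_starC.1 hz).1]
      rw [sum_congr rfl hterm, ← sum_mul]
      rfl
    rw [hMS, hMU, heulU, zero_add, esgn_pow, ← esgn_add,
      show ((d : ℤ) + (d : ℤ) * m) = ((d * (m + 1) : ℕ) : ℤ) by push_cast; ring,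
      esgn_natCast]
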